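/- Let n ≥ 2 and N ≥ 2 be integers and let θ_1,…,θ_N ∈ [0, π] satisfy Σ_{i=1}^N θ_i = π. Then Σ_{i=1}^N (n − 1 − cos θ_i)(1 − cos θ_i) ≥ N (n − 1 − cos(π/N))(1 − cos(π/N)); that is, the minimum of the left-hand side over the constraint set is attained when all angles are equal to π/N. -/

import Mathlib

open Real BigOperators Finset

lemma jensen_cos {ι : Type*} (t : Finset ι) (ht : t.Nonempty) (θ : ι → ℝ)
    (h : ∀ i ∈ t, θ i ∈ Set.Icc 0 (π/2)) :
    ∑ i ∈ t, Real.cos (θ i) ≤ t.card * Real.cos ((∑ i ∈ t, θ i) / t.card) := by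
  have hc : (0:ℝ) < t.card := by exact_mod_cast ht.card_pos
  have key := (strictConcaveOn_cos_Icc.concaveOn).le_map_sum
    (t := t) (w := fun _ => (t.card:ℝ)⁻¹) (p := θ)
    (fun i _ => by positivity)
    (by simp [Finset.sum_const, nsmul_eq_mul]; field_simp)
    (fun i hi => ⟨by linarith [(h i hi).1, pi_pos], (h i hi).2⟩)
  simp only [smul_eq_mul, ← Finset.mul_sum] at key
  rw [div_eq_inv_mul]
  calc ∑ i ∈ t, Real.cos (θ i) = t.card * ((t.card:ℝ)⁻¹ * ∑ i ∈ t, Real.cos (θ i)) := by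
        field_simp
    _ ≤ t.card * Real.cos ((t.card:ℝ)⁻¹ * ∑ i ∈ t, θ i) :=
        mul_le_mul_of_nonneg_left key hc.le

lemma key_ineq {N : ℕ} (hN : 2 ≤ N) (σ : ℝ) (h0 : 0 ≤ σ) (h1 : σ ≤ π/2) :
    ((N:ℝ) - 1) * Real.cos (σ / ((N:ℝ) - 1)) - Real.cos σ ≤ (N:ℝ) * Real.cos (π / N) := by
  rcases Nat.lt_or_ge N 5 with h5 | h5
  · interval_cases N
    · norm_num
    · -- N = 3
      have h2 := Real.cos_two_mul (σ/2)
      rw [show 2*(σ/2) = σ by ring] at h2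
      push_cast
      norm_num
      nlinarith [sq_nonneg (2*Real.cos (σ/2) - 1)]
    · -- N = 4
      have h3 := Real.cos_three_mul (σ/3)
      rw [show 3*(σ/3) = σ by ring] at h3
      have hu0 : 0 ≤ Real.cos (σ/3) :=
        Real.cos_nonneg_of_mem_Icc ⟨by linarith [pi_pos], by linarith [pi_pos]⟩
      push_cast
      norm_num
      nlinarith [mul_nonneg (sq_nonneg (Real.cos (σ/3) - Real.sqrt 2/2))
          (by positivity : (0:ℝ) ≤ Real.cos (σ/3) + Real.sqrt 2),
        Real.sq_sqrt (by norm_num : (0:ℝ) ≤ 2), Real.sqrt_nonneg 2]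
  · -- N ≥ 5
    have hM : (5:ℝ) ≤ (N:ℝ) := by exact_mod_cast h5
    have hMpos : (0:ℝ) < (N:ℝ) := by linarith
    have hpi2 : π^2 ≤ 10 := by nlinarith [pi_lt_d2, pi_pos]
    have hq : (π/(N:ℝ))^2 ≤ 2/(N:ℝ) := by
      rw [div_pow, div_le_div_iff₀ (by positivity) hMpos]
      nlinarith
    have hc1 : 1 - 1/(N:ℝ) ≤ Real.cos (π/N) := by
      have := Real.one_sub_sq_div_two_le_cos (x := π/(N:ℝ))
      have h1N : (1:ℝ)/N = (2/(N:ℝ))/2 := by ring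
      linarith [hq]
    have hcσ : 0 ≤ Real.cos σ :=
      Real.cos_nonneg_of_mem_Icc ⟨by linarith [pi_pos], h1⟩
    have hcx : Real.cos (σ / ((N:ℝ)-1)) ≤ 1 := Real.cos_le_one _
    have hfin : (N:ℝ) * (1 - 1/(N:ℝ)) = (N:ℝ) - 1 := by field_simp
    nlinarith [mul_le_mul_of_nonneg_left hc1 hMpos.le,
      mul_le_mul_of_nonneg_left hcx (by linarith : (0:ℝ) ≤ (N:ℝ) - 1)]

lemma sum_cos_le {N : ℕ} (hN : 2 ≤ N) (θ : Fin N → ℝ)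
    (hθ : ∀ i, θ i ∈ Set.Icc 0 π) (hsum : ∑ i, θ i = π) :
    ∑ i, Real.cos (θ i) ≤ (N:ℝ) * Real.cos (π / N) := by
  have hNpos : 0 < N := by omega
  haveI : Nonempty (Fin N) := Fin.pos_iff_nonempty.mp hNpos
  by_cases hall : ∀ i, θ i ≤ π/2
  · have := jensen_cos univ univ_nonempty θ (fun i _ => ⟨(hθ i).1, hall i⟩)
    simpa [hsum, Finset.card_univ] using this
  · push_neg at hall
    obtain ⟨j, hj⟩ := hall
    have hjm : j ∈ (univ : Finset (Fin N)) := mem_univ j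
    have hsplit : ∑ i ∈ univ.erase j, θ i + θ j = π := by
      rw [Finset.sum_erase_add _ _ hjm, hsum]
    set σ : ℝ := π - θ j with hσdef
    have hσsum : ∑ i ∈ univ.erase j, θ i = σ := by linarith
    have hσ0 : 0 ≤ σ := by have := (hθ j).2; simp [hσdef]; linarith
    have hσhalf : σ ≤ π/2 := by simp [hσdef]; linarith
    have hmem : ∀ i ∈ univ.erase j, θ i ∈ Set.Icc 0 (π/2) := by
      intro i hi
      refine ⟨(hθ i).1, ?_⟩
      have hle : θ i ≤ ∑ k ∈ univ.erase j, θ k :=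
        Finset.single_le_sum (fun k _ => (hθ k).1) hi
      linarith [hσsum ▸ hle]
    have hne : (univ.erase j).Nonempty := by
      rw [← Finset.card_pos, Finset.card_erase_of_mem hjm, Finset.card_univ]
      simpa using by omega
    have hcard : ((univ.erase j).card : ℝ) = (N:ℝ) - 1 := by
      rw [Finset.card_erase_of_mem hjm, Finset.card_univ, Fintype.card_fin]
      push_cast [Nat.cast_sub hNpos]
      ring
    have hjensen := jensen_cos (univ.erase j) hne θ hmem
    rw [hσsum, hcard] at hjensen
    have hcosj : Real.cos (θ j) = - Real.cos σ := by
      rw [show θ j = π - σ by simp [hσdef]]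
      exact Real.cos_pi_sub σ
    have htot : ∑ i, Real.cos (θ i) = ∑ i ∈ univ.erase j, Real.cos (θ i) - Real.cos σ := by
      rw [← Finset.sum_erase_add _ _ hjm, hcosj]; ring
    rw [htot]
    have := key_ineq hN σ hσ0 hσhalf
    linarith

/-- For angles `θ₁, …, θ_N ∈ [0, π]` summing to `π`, the objective
`Σᵢ (n − 1 − cos θᵢ)(1 − cos θᵢ)` is minimized at the equal-angle configuration
`θᵢ = π/N`. -/
theorem angle_optimization_equal_angles
    {n N : ℕ} (hn : 2 ≤ n) (hN : 2 ≤ N)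
    (θ : Fin N → ℝ) (hθ : ∀ i, θ i ∈ Set.Icc 0 π)
    (hsum : ∑ i, θ i = π) :
    (N : ℝ) * (((n : ℝ) - 1 - Real.cos (π / (N : ℝ))) * (1 - Real.cos (π / (N : ℝ))))
      ≤ ∑ i, ((n : ℝ) - 1 - Real.cos (θ i)) * (1 - Real.cos (θ i)) := by
  have hNpos : (0:ℝ) < N := by positivity
  have hn2 : (2:ℝ) ≤ (n:ℝ) := by exact_mod_cast hn
  set c : ℝ := Real.cos (π / N) with hc
  have hkey := sum_cos_le hN θ hθ hsum
  set S : ℝ := ∑ i, (1 - Real.cos (θ i)) with hSdef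
  have hS : (N:ℝ) * (1 - c) ≤ S := by
    have : S = (N:ℝ) - ∑ i, Real.cos (θ i) := by
      simp [hSdef, Finset.sum_sub_distrib, Finset.card_univ]
    rw [this]; linarith
  have hstar : 0 ≤ 1 - c := by
    have := Real.cos_le_one (π / (N:ℝ)); linarith
  have hCS : S^2 ≤ (N:ℝ) * ∑ i, (1 - Real.cos (θ i))^2 := by
    have h := sq_sum_le_card_mul_sum_sq (s := (univ : Finset (Fin N)))
      (f := fun i => 1 - Real.cos (θ i))
    rw [Finset.card_univ, Fintype.card_fin] at h
    rw [hSdef]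
    exact_mod_cast h
  have hrw : ∑ i, ((n:ℝ) - 1 - Real.cos (θ i)) * (1 - Real.cos (θ i))
      = ((n:ℝ) - 2) * S + ∑ i, (1 - Real.cos (θ i))^2 := by
    rw [hSdef, Finset.mul_sum, ← Finset.sum_add_distrib]
    exact Finset.sum_congr rfl (fun i _ => by ring)
  rw [hrw]
  have hSnn : 0 ≤ S := le_trans (by positivity) hS
  have hsq : ((N:ℝ) * (1 - c)) * ((N:ℝ) * (1 - c)) ≤ S * S :=
    mul_self_le_mul_self (by positivity) hS
  nlinarith [mul_le_mul_of_nonneg_left hS (by linarith : (0:ℝ) ≤ (n:ℝ) - 2), hCS, hsq,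
    mul_pos hNpos hNpos]
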